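/- Let G be a k×n matrix over F₂ every row of which has Hamming weight at most t, let p ∈ (0,1), and let I ⊆ {1,…,n} be a random subset containing each element independently with probability 1−p. Let G_I be the submatrix of G formed by the columns indexed by I. Then Pr(rank(G_I) = k) < exp(−k²·p^{2t}/(2n)), where the rank is over F₂. -/

import Mathlib

open Finset

lemma binsum {α : Type*} [DecidableEq α] (a b : ℝ) (T : Finset α) :
    ∑ D ∈ T.powerset, a ^ D.card * b ^ (T.card - D.card) = (a + b) ^ T.card := by
  induction T using Finset.induction_on with
  | empty => simp
  | insert x T hx ih =>
    rw [Finset.powerset_insert, Finset.sum_union, Finset.sum_image]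
    · have hc : (insert x T).card = T.card + 1 := Finset.card_insert_of_notMem hx
      have h1 : ∑ D ∈ T.powerset, a ^ D.card * b ^ ((insert x T).card - D.card)
          = b * ∑ D ∈ T.powerset, a ^ D.card * b ^ (T.card - D.card) := by
        rw [Finset.mul_sum]
        refine Finset.sum_congr rfl fun D hD => ?_
        have hDT : D.card ≤ T.card := Finset.card_le_card (Finset.mem_powerset.1 hD)
        rw [hc]
        have : T.card + 1 - D.card = (T.card - D.card) + 1 := by omega
        rw [this, pow_succ]
        ring
      have h2 : ∑ D ∈ T.powerset, a ^ (insert x D).card * b ^ ((insert x T).card - (insert x D).card)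
          = a * ∑ D ∈ T.powerset, a ^ D.card * b ^ (T.card - D.card) := by
        rw [Finset.mul_sum]
        refine Finset.sum_congr rfl fun D hD => ?_
        have hDT : D ⊆ T := Finset.mem_powerset.1 hD
        have hxD : x ∉ D := fun h => hx (hDT h)
        rw [hc, Finset.card_insert_of_notMem hxD, pow_succ]
        have : T.card + 1 - (D.card + 1) = T.card - D.card := by omega
        rw [this]
        ring
      rw [h1, h2, ih, hc, pow_succ]
      ring
    · intro D hD D' hD' hEq
      have hxD : x ∉ D := fun h => hx (Finset.mem_powerset.1 hD h)
      have hxD' : x ∉ D' := fun h => hx (Finset.mem_powerset.1 hD' h)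
      have := congrArg (Finset.erase · x) hEq
      simpa [Finset.erase_insert, hxD, hxD'] using this
    · rw [Finset.disjoint_left]
      intro D hD hD2
      obtain ⟨D', hD', rfl⟩ := Finset.mem_image.1 hD2
      exact hx (Finset.mem_powerset.1 hD (Finset.mem_insert_self x D'))

lemma totalmass (p : ℝ) (n : ℕ) :
    ∑ I : Finset (Fin n), (1 - p) ^ I.card * p ^ (n - I.card) = 1 := by
  have h := binsum (1 - p) p (Finset.univ : Finset (Fin n))
  simp only [sub_add_cancel, one_pow, Finset.card_univ, Fintype.card_fin] at h
  calc ∑ I : Finset (Fin n), (1 - p) ^ I.card * p ^ (n - I.card)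
      = ∑ I ∈ (Finset.univ : Finset (Fin n)).powerset, (1 - p) ^ I.card * p ^ (n - I.card) := by
        rw [Finset.powerset_univ]
    _ = 1 := h


lemma supersum (p : ℝ) {n : ℕ} (S I' : Finset (Fin n)) :
    ∑ I ∈ Finset.univ.filter (fun I : Finset (Fin n) => I' ⊆ I ∧ I ⊆ I' ∪ S),
      (1 - p) ^ I.card * p ^ (n - I.card)
    = (1 - p) ^ I'.card * p ^ (n - I'.card - (S \ I').card) := by
  classical
  have hdisj : Disjoint I' (S \ I') := Finset.disjoint_sdiff
  have hm : I'.card + (S \ I').card ≤ n := by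
    have h1 := Finset.card_le_card (Finset.subset_univ (I' ∪ (S \ I')))
    rw [Finset.card_union_of_disjoint hdisj, Finset.card_univ, Fintype.card_fin] at h1
    exact h1
  set m := (S \ I').card with hm'
  have key : ∑ I ∈ Finset.univ.filter (fun I : Finset (Fin n) => I' ⊆ I ∧ I ⊆ I' ∪ S),
      (1 - p) ^ I.card * p ^ (n - I.card)
      = ∑ D ∈ (S \ I').powerset, (1 - p) ^ (I' ∪ D).card * p ^ (n - (I' ∪ D).card) := by
    refine Finset.sum_nbij' (fun I => I \ I') (fun D => I' ∪ D) ?_ ?_ ?_ ?_ ?_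
    · intro I hI
      simp only [Finset.mem_filter, Finset.mem_univ, true_and] at hI
      rw [Finset.mem_powerset]
      intro x hx
      rw [Finset.mem_sdiff] at hx ⊢
      rcases Finset.mem_union.1 (hI.2 hx.1) with h | h
      · exact absurd h hx.2
      · exact ⟨h, hx.2⟩
    · intro D hD
      rw [Finset.mem_powerset] at hD
      simp only [Finset.mem_filter, Finset.mem_univ, true_and]
      constructor
      · exact Finset.subset_union_left
      · exact Finset.union_subset_union_right (hD.trans Finset.sdiff_subset)
    · intro I hI
      simp only [Finset.mem_filter, Finset.mem_univ, true_and] at hI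
      exact Finset.union_sdiff_of_subset hI.1
    · intro D hD
      rw [Finset.mem_powerset] at hD
      show (I' ∪ D) \ I' = D
      exact Finset.union_sdiff_cancel_left (Finset.disjoint_of_subset_right hD hdisj)
    · intro I hI
      simp only [Finset.mem_filter, Finset.mem_univ, true_and] at hI
      rw [Finset.union_sdiff_of_subset hI.1]
  rw [key]
  have hcard : ∀ D ∈ (S \ I').powerset, (I' ∪ D).card = I'.card + D.card := by
    intro D hD
    rw [Finset.mem_powerset] at hD
    exact Finset.card_union_of_disjoint (Finset.disjoint_of_subset_right hD hdisj)
  calc ∑ D ∈ (S \ I').powerset, (1 - p) ^ (I' ∪ D).card * p ^ (n - (I' ∪ D).card)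
      = ∑ D ∈ (S \ I').powerset,
          ((1 - p) ^ I'.card * p ^ (n - I'.card - m)) * ((1 - p) ^ D.card * p ^ (m - D.card)) := by
        refine Finset.sum_congr rfl fun D hD => ?_
        have h1 := hcard D hD
        have hDm : D.card ≤ m := Finset.card_le_card (Finset.mem_powerset.1 hD)
        rw [h1, pow_add]
        have : n - (I'.card + D.card) = (n - I'.card - m) + (m - D.card) := by omega
        rw [this, pow_add]
        ring
    _ = (1 - p) ^ I'.card * p ^ (n - I'.card - m) := by
        rw [← Finset.mul_sum]
        have := binsum (1 - p) p (S \ I')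
        simp only [sub_add_cancel, one_pow] at this
        rw [← hm'] at this
        rw [this, mul_one]
open Finset

def PP {n k : ℕ} (v : Fin k → Fin n → ZMod 2) (I : Finset (Fin n)) : Prop :=
  ∀ c : Fin k → ZMod 2, c ≠ 0 → ∃ j ∈ I, ∑ i, c i * v i j ≠ 0

open scoped Classical in
noncomputable def EE (p : ℝ) {n k : ℕ} (v : Fin k → Fin n → ZMod 2) : ℝ :=
  ∑ I : Finset (Fin n), (1 - p) ^ I.card * p ^ (n - I.card) * (if PP v I then 1 else 0)

lemma usum_add {n k : ℕ} (v : Fin k → Fin n → ZMod 2) (c c' : Fin k → ZMod 2) (j : Fin n) :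
    ∑ i, (c + c') i * v i j = (∑ i, c i * v i j) + ∑ i, c' i * v i j := by
  rw [← Finset.sum_add_distrib]
  refine Finset.sum_congr rfl fun i _ => ?_
  simp [add_mul]

lemma zmod2_add_ne (x y : ZMod 2) (hx : x ≠ 0) (hy : y ≠ 0) : x + y = 0 := by
  revert x y; decide

lemma exists_compress {n k : ℕ} (v : Fin k → Fin n → ZMod 2) (w : Fin n → ZMod 2)
    (I : Finset (Fin n)) (hI : PP v I) :
    ∃ I' : Finset (Fin n), I' ⊆ I ∧ (I \ I' ⊆ Finset.univ.filter (fun j => w j ≠ 0)) ∧ PP v I' ∧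
      ∃ c : Fin k → ZMod 2, ∀ j ∈ I', (∑ i, c i * v i j) + w j = 0 := by
  classical
  set S := Finset.univ.filter (fun j => w j ≠ 0) with hS
  set F : (Fin k → ZMod 2) → Fin n → ZMod 2 := fun c j => (∑ i, c i * v i j) + w j with hF
  set C := Finset.univ.filter (fun c : Fin k → ZMod 2 => ∀ j ∈ I \ S, F c j = 0) with hC
  have h0 : (0 : Fin k → ZMod 2) ∈ C := by
    rw [hC, Finset.mem_filter]
    refine ⟨Finset.mem_univ _, fun j hj => ?_⟩
    have hw : w j = 0 := by
      have := (Finset.mem_sdiff.1 hj).2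
      rw [hS] at this
      simpa using this
    simp [hF, hw]
  obtain ⟨cs, hcs, hmax⟩ := Finset.exists_max_image C
    (fun c => (I.filter (fun j => F c j = 0)).card) ⟨0, h0⟩
  rw [hC, Finset.mem_filter] at hcs
  refine ⟨I.filter (fun j => F cs j = 0), Finset.filter_subset _ _, ?_, ?_, cs, ?_⟩
  · intro j hj
    rw [Finset.mem_sdiff, Finset.mem_filter] at hj
    by_contra hjS
    have : j ∈ I \ S := Finset.mem_sdiff.2 ⟨hj.1, hjS⟩
    exact hj.2 ⟨hj.1, hcs.2 j this⟩
  · intro c hc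
    by_contra hcon
    push_neg at hcon
    have hzero : ∀ j ∈ I.filter (fun j => F cs j = 0), ∑ i, c i * v i j = 0 := fun j hj =>
      hcon j hj
    have hIS : ∀ j ∈ I \ S, j ∈ I.filter (fun j => F cs j = 0) := fun j hj =>
      Finset.mem_filter.2 ⟨(Finset.mem_sdiff.1 hj).1, hcs.2 j hj⟩
    have hC' : c + cs ∈ C := by
      rw [hC, Finset.mem_filter]
      refine ⟨Finset.mem_univ _, fun j hj => ?_⟩
      have h1 : F (c + cs) j = (∑ i, c i * v i j) + F cs j := by
        simp only [hF, usum_add]; ring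
      rw [h1, hzero j (hIS j hj), hcs.2 j hj, add_zero]
    have hsub : I.filter (fun j => F cs j = 0) ⊆ I.filter (fun j => F (c + cs) j = 0) := by
      intro j hj
      have h1 : F (c + cs) j = (∑ i, c i * v i j) + F cs j := by
        simp only [hF, usum_add]; ring
      refine Finset.mem_filter.2 ⟨(Finset.mem_filter.1 hj).1, ?_⟩
      rw [h1, hzero j hj, (Finset.mem_filter.1 hj).2, add_zero]
    obtain ⟨j₀, hj₀I, hj₀⟩ := hI c hc
    have hj₀I' : j₀ ∉ I.filter (fun j => F cs j = 0) := fun h => hj₀ (hzero j₀ h)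
    have hFcs : F cs j₀ ≠ 0 := fun h => hj₀I' (Finset.mem_filter.2 ⟨hj₀I, h⟩)
    have hj₀new : j₀ ∈ I.filter (fun j => F (c + cs) j = 0) := by
      refine Finset.mem_filter.2 ⟨hj₀I, ?_⟩
      have h1 : F (c + cs) j₀ = (∑ i, c i * v i j₀) + F cs j₀ := by
        simp only [hF, usum_add]; ring
      rw [h1]
      exact zmod2_add_ne _ _ hj₀ hFcs
    have hss : I.filter (fun j => F cs j = 0) ⊂ I.filter (fun j => F (c + cs) j = 0) :=
      ⟨hsub, fun h => hj₀I' (h hj₀new)⟩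
    have := Finset.card_lt_card hss
    have := hmax (c + cs) hC'
    omega
  · intro j hj
    exact (Finset.mem_filter.1 hj).2

lemma snoc_iff {n k : ℕ} (v : Fin k → Fin n → ZMod 2) (w : Fin n → ZMod 2)
    (I : Finset (Fin n)) :
    PP (Fin.snoc v w) I ↔ (PP v I ∧
      ¬ ∃ c : Fin k → ZMod 2, ∀ j ∈ I, (∑ i, c i * v i j) + w j = 0) := by
  have hsum : ∀ (c : Fin k → ZMod 2) (a : ZMod 2) (j : Fin n),
      ∑ i : Fin (k + 1), (Fin.snoc c a : Fin (k+1) → ZMod 2) i *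
        (Fin.snoc v w : Fin (k+1) → Fin n → ZMod 2) i j
        = (∑ i, c i * v i j) + a * w j := by
    intro c a j
    rw [Fin.sum_univ_castSucc]
    simp [Fin.snoc_castSucc, Fin.snoc_last]
  constructor
  · intro hg
    constructor
    · intro c hc
      have hc' : (Fin.snoc c 0 : Fin (k+1) → ZMod 2) ≠ 0 := by
        intro h
        apply hc
        funext i
        have := congrFun h i.castSucc
        simpa [Fin.snoc_castSucc] using this
      obtain ⟨j, hj, hne⟩ := hg _ hc'
      rw [hsum] at hne
      refine ⟨j, hj, fun h => hne ?_⟩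
      rw [h, zero_mul, zero_add]
    · rintro ⟨c, hcov⟩
      have hc' : (Fin.snoc c 1 : Fin (k+1) → ZMod 2) ≠ 0 := by
        intro h
        have := congrFun h (Fin.last k)
        rw [Fin.snoc_last] at this
        exact one_ne_zero this
      obtain ⟨j, hj, hne⟩ := hg _ hc'
      rw [hsum] at hne
      exact hne (by rw [one_mul]; exact hcov j hj)
  · rintro ⟨h, hnc⟩ c' hc'
    have hdec : c' = (Fin.snoc (Fin.init c') (c' (Fin.last k)) : Fin (k+1) → ZMod 2) :=
      (Fin.snoc_init_self c').symm
    rcases (by decide : ∀ x : ZMod 2, x = 0 ∨ x = 1) (c' (Fin.last k)) with h0 | h1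
    · have hci : Fin.init c' ≠ 0 := by
        intro hz
        apply hc'
        funext i
        refine Fin.lastCases ?_ ?_ i
        · exact h0
        · intro i; exact congrFun hz i
      obtain ⟨j, hj, hne⟩ := h _ hci
      refine ⟨j, hj, fun hzero => hne ?_⟩
      rw [hdec, hsum, h0, zero_mul, add_zero] at hzero
      exact hzero
    · push_neg at hnc
      obtain ⟨j, hj, hne⟩ := hnc (Fin.init c')
      refine ⟨j, hj, fun hzero => hne ?_⟩
      rw [hdec, hsum, h1, one_mul] at hzero
      exact hzero

open scoped Classical in
lemma step_lemma (p : ℝ) (hp0 : 0 < p) (hp1 : p < 1) {n k : ℕ}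
    (v : Fin k → Fin n → ZMod 2) (w : Fin n → ZMod 2) :
    EE p (Fin.snoc v w) ≤
      (1 - p ^ (Finset.univ.filter (fun j => w j ≠ 0)).card) * EE p v := by
  classical
  set S := Finset.univ.filter (fun j => w j ≠ 0) with hS
  set s := S.card with hs
  set μ : Finset (Fin n) → ℝ := fun I => (1 - p) ^ I.card * p ^ (n - I.card) with hμ
  have hμ0 : ∀ I, 0 ≤ μ I :=
    fun I => mul_nonneg (pow_nonneg (by linarith) _) (pow_nonneg (by linarith) _)
  set cov : Finset (Fin n) → Prop :=
    fun I => ∃ c : Fin k → ZMod 2, ∀ j ∈ I, (∑ i, c i * v i j) + w j = 0 with hcov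
  -- decomposition
  have hdecomp : EE p (Fin.snoc v w)
      = EE p v - ∑ I : Finset (Fin n), μ I * (if PP v I ∧ cov I then 1 else 0) := by
    rw [EE, EE, ← Finset.sum_sub_distrib]
    refine Finset.sum_congr rfl fun I _ => ?_
    have hiff : PP (Fin.snoc v w) I ↔ (PP v I ∧ ¬ cov I) := by
      rw [hcov]; exact snoc_iff v w I
    have h1 : (if PP (Fin.snoc v w) I then (1:ℝ) else 0)
        = (if PP v I then 1 else 0) - (if PP v I ∧ cov I then 1 else 0) := by
      rw [if_congr hiff rfl rfl]
      by_cases hA : PP v I <;> by_cases hB : cov I <;> simp [hA, hB]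
    rw [h1]
    ring
  -- Claim A
  set ψ : Finset (Fin n) → Finset (Fin n) :=
    fun I => if hI : PP v I then (exists_compress v w I hI).choose else ∅ with hψ
  set A := Finset.univ.filter (fun I : Finset (Fin n) => PP v I) with hA
  set B := Finset.univ.filter (fun I : Finset (Fin n) => PP v I ∧ cov I) with hB
  have hψspec : ∀ I ∈ A, ψ I ⊆ I ∧ I \ ψ I ⊆ S ∧ PP v (ψ I) ∧ cov (ψ I) := by
    intro I hI
    rw [hA, Finset.mem_filter] at hI
    have hPI := hI.2
    rw [hψ]
    simp only [dif_pos hPI]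
    obtain ⟨h1, h2, h3, h4⟩ := (exists_compress v w I hPI).choose_spec
    exact ⟨h1, h2, h3, h4⟩
  have hmaps : ∀ I ∈ A, ψ I ∈ B := by
    intro I hI
    obtain ⟨_, _, h3, h4⟩ := hψspec I hI
    rw [hB, Finset.mem_filter]
    exact ⟨Finset.mem_univ _, h3, h4⟩
  have hEEv : EE p v = ∑ I ∈ A, μ I := by
    rw [EE, hA, Finset.sum_filter]
    refine Finset.sum_congr rfl fun I _ => ?_
    by_cases hP : PP v I <;> simp [hP, hμ]
  have hEEcov : ∑ I : Finset (Fin n), μ I * (if PP v I ∧ cov I then 1 else 0)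
      = ∑ I ∈ B, μ I := by
    rw [hB, Finset.sum_filter]
    refine Finset.sum_congr rfl fun I _ => ?_
    by_cases hP : PP v I ∧ cov I <;> simp [hP]
  have claimA : p ^ s * EE p v ≤ ∑ I ∈ B, μ I := by
    rw [hEEv, ← Finset.sum_fiberwise_of_maps_to hmaps μ, Finset.mul_sum]
    refine Finset.sum_le_sum fun I' hI' => ?_
    -- inner fiber bound
    have hsub : A.filter (fun I => ψ I = I') ⊆
        Finset.univ.filter (fun I : Finset (Fin n) => I' ⊆ I ∧ I ⊆ I' ∪ S) := by
      intro I hI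
      rw [Finset.mem_filter] at hI
      obtain ⟨h1, h2, _, _⟩ := hψspec I hI.1
      rw [Finset.mem_filter]
      refine ⟨Finset.mem_univ _, ?_, ?_⟩
      · rw [← hI.2]; exact h1
      · intro x hx
        rw [Finset.mem_union]
        by_cases hxI' : x ∈ I'
        · exact Or.inl hxI'
        · refine Or.inr (h2 ?_)
          rw [Finset.mem_sdiff, hI.2]
          exact ⟨hx, hxI'⟩
    have hinner : ∑ I ∈ A.filter (fun I => ψ I = I'), μ I
        ≤ (1 - p) ^ I'.card * p ^ (n - I'.card - (S \ I').card) := by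
      rw [← supersum p S I']
      exact Finset.sum_le_sum_of_subset_of_nonneg hsub fun I _ _ => hμ0 I
    have hfinal : p ^ s * ((1 - p) ^ I'.card * p ^ (n - I'.card - (S \ I').card)) ≤ μ I' := by
      rw [hμ]
      have hmle : (S \ I').card ≤ s := Finset.card_le_card Finset.sdiff_subset
      have hexp : n - I'.card ≤ s + (n - I'.card - (S \ I').card) := by omega
      have hpow : p ^ (s + (n - I'.card - (S \ I').card)) ≤ p ^ (n - I'.card) :=
        pow_le_pow_of_le_one hp0.le hp1.le hexp
      calc p ^ s * ((1 - p) ^ I'.card * p ^ (n - I'.card - (S \ I').card))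
          = (1 - p) ^ I'.card * p ^ (s + (n - I'.card - (S \ I').card)) := by
            rw [pow_add]; ring
        _ ≤ (1 - p) ^ I'.card * p ^ (n - I'.card) :=
            mul_le_mul_of_nonneg_left hpow (pow_nonneg (by linarith) _)
    calc p ^ s * ∑ I ∈ A.filter (fun I => ψ I = I'), μ I
        ≤ p ^ s * ((1 - p) ^ I'.card * p ^ (n - I'.card - (S \ I').card)) :=
          mul_le_mul_of_nonneg_left hinner (pow_nonneg hp0.le _)
      _ ≤ μ I' := hfinal
  rw [hdecomp, hEEcov]
  nlinarith [claimA]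

open scoped Classical in
lemma EE_nonneg (p : ℝ) (hp0 : 0 ≤ p) (hp1 : p ≤ 1) {n k : ℕ}
    (v : Fin k → Fin n → ZMod 2) : 0 ≤ EE p v := by
  refine Finset.sum_nonneg fun I _ => ?_
  refine mul_nonneg (mul_nonneg (pow_nonneg (by linarith) _) (pow_nonneg hp0 _)) ?_
  split <;> norm_num

open scoped Classical in
lemma EE_le_one (p : ℝ) (hp0 : 0 ≤ p) (hp1 : p ≤ 1) {n k : ℕ}
    (v : Fin k → Fin n → ZMod 2) : EE p v ≤ 1 := by
  rw [EE]
  calc ∑ I : Finset (Fin n), (1 - p) ^ I.card * p ^ (n - I.card) * (if PP v I then 1 else 0)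
      ≤ ∑ I : Finset (Fin n), (1 - p) ^ I.card * p ^ (n - I.card) := by
        refine Finset.sum_le_sum fun I _ => ?_
        have h0 : (0:ℝ) ≤ (1 - p) ^ I.card * p ^ (n - I.card) :=
          mul_nonneg (pow_nonneg (by linarith) _) (pow_nonneg hp0 _)
        split <;> simp <;> linarith
    _ = 1 := totalmass p n

open scoped Classical in
lemma prodbound (p : ℝ) (hp0 : 0 < p) (hp1 : p < 1) (t : ℕ) {n : ℕ} :
    ∀ {k : ℕ} (v : Fin k → Fin n → ZMod 2),
      (∀ i, (Finset.univ.filter (fun j => v i j ≠ 0)).card ≤ t) →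
      EE p v ≤ (1 - p ^ t) ^ k := by
  intro k
  induction k with
  | zero => intro v _; simpa using EE_le_one p hp0.le hp1.le v
  | succ k ih =>
    intro v hv
    have hqt : p ^ t ≤ 1 := pow_le_one₀ hp0.le hp1.le
    calc EE p v
        = EE p (Fin.snoc (Fin.init v) (v (Fin.last k)) : Fin (k+1) → Fin n → ZMod 2) := by
          rw [Fin.snoc_init_self]
      _ ≤ (1 - p ^ (Finset.univ.filter (fun j => v (Fin.last k) j ≠ 0)).card) *
            EE p (Fin.init v) := step_lemma p hp0 hp1 _ _
      _ ≤ (1 - p ^ t) * (1 - p ^ t) ^ k := by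
          refine mul_le_mul ?_ (ih (Fin.init v) fun i => hv i.castSucc) ?_ (by linarith)
          · have : p ^ t ≤ p ^ (Finset.univ.filter (fun j => v (Fin.last k) j ≠ 0)).card :=
              pow_le_pow_of_le_one hp0.le hp1.le (hv (Fin.last k))
            linarith
          · exact EE_nonneg p hp0.le hp1.le _
      _ = (1 - p ^ t) ^ (k + 1) := by rw [pow_succ]; ring

open scoped Classical in
lemma rank_iff {n k : ℕ} (G : Matrix (Fin k) (Fin n) (ZMod 2)) (I : Finset (Fin n)) :
    (G.submatrix id (fun j : ↥I => (j : Fin n))).rank = k ↔ PP (fun i j => G i j) I := by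
  haveI : Fact (Nat.Prime 2) := ⟨Nat.prime_two⟩
  set M := G.submatrix id (fun j : ↥I => (j : Fin n)) with hM
  have h1 : M.rank = k ↔ LinearIndependent (ZMod 2) (fun i => M i) := by
    rw [Matrix.rank_eq_finrank_span_row, linearIndependent_iff_card_eq_finrank_span]
    rw [Set.finrank, Fintype.card_fin]
    exact eq_comm
  rw [h1, Fintype.linearIndependent_iff]
  constructor
  · intro h c hc
    by_contra hcon
    push_neg at hcon
    apply hc
    funext i
    refine h c ?_ i
    funext j
    rw [Finset.sum_apply]
    simpa [hM] using hcon j.1 j.2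
  · intro h g hg
    have hg0 : g = 0 := by
      by_contra hgne
      obtain ⟨j, hjI, hne⟩ := h g hgne
      apply hne
      have := congrFun hg (⟨j, hjI⟩ : ↥I)
      rw [Finset.sum_apply] at this
      simpa [hM] using this
    intro i
    rw [hg0]
    rfl

/-- if every row of the `k × n` matrix `G` over F₂ (`k ≥ 1`) has Hamming
weight at most `t`, and `I` is a random subset of the columns keeping each column
independently with probability `1−p`, then
`Pr(rank(G_I) = k) < exp(−k² p^{2t}/(2n))`. -/
theorem stmt_7 {k n t : ℕ} (hk : 1 ≤ k) (p : ℝ) (hp0 : 0 < p) (hp1 : p < 1)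
    (G : Matrix (Fin k) (Fin n) (ZMod 2))
    (hrow : ∀ i, hammingNorm (G i) ≤ t) :
    ∑ I : Finset (Fin n), ((1 - p) ^ I.card * p ^ (n - I.card)) *
        (if (G.submatrix id (fun j : ↥I => (j : Fin n))).rank = k then 1 else 0)
      < Real.exp (-((k : ℝ) ^ 2 * p ^ (2 * t)) / (2 * n)) := by
  classical
  rcases le_or_gt k n with hkn | hnk
  · have hLHS : (∑ I : Finset (Fin n), ((1 - p) ^ I.card * p ^ (n - I.card)) *
          (if (G.submatrix id (fun j : ↥I => (j : Fin n))).rank = k then 1 else 0))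
        = EE p (fun i j => G i j) := by
      rw [EE]
      refine Finset.sum_congr rfl fun I _ => ?_
      rw [if_congr (rank_iff G I) rfl rfl]
    have hn1 : 1 ≤ n := le_trans hk hkn
    have hv : ∀ i, (Finset.univ.filter (fun j => G i j ≠ 0)).card ≤ t := by
      intro i
      have h := hrow i
      rw [hammingNorm] at h
      convert h using 2
    have h1 : EE p (fun i j => G i j) ≤ (1 - p ^ t) ^ k := prodbound p hp0 hp1 t _ hv
    set q := p ^ t with hq
    have hq0 : 0 < q := pow_pos hp0 t
    have hq1 : q ≤ 1 := pow_le_one₀ hp0.le hp1.le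
    have h2 : (1 - q) ^ k ≤ Real.exp (-q) ^ k := by
      refine pow_le_pow_left₀ (by linarith) ?_ k
      have := Real.add_one_le_exp (-q)
      linarith
    have h3 : Real.exp (-q) ^ k = Real.exp (-((k : ℝ) * q)) := by
      rw [← Real.exp_nat_mul, mul_neg]
    have h4 : Real.exp (-((k : ℝ) * q)) < Real.exp (-((k : ℝ) ^ 2 * p ^ (2 * t)) / (2 * n)) := by
      rw [Real.exp_lt_exp]
      have hp2t : p ^ (2 * t) = q ^ 2 := by rw [hq, mul_comm 2 t, pow_mul]
      rw [hp2t]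
      have hkR : (1:ℝ) ≤ (k:ℝ) := by exact_mod_cast hk
      have h5 : (k:ℝ) ≤ n := by exact_mod_cast hkn
      have hkq : (k:ℝ) * q ≤ n := by nlinarith
      have hkq0 : (0:ℝ) < (k:ℝ) * q := mul_pos (by linarith) hq0
      have hn0 : (0:ℝ) < n := by exact_mod_cast hn1
      rw [neg_div, neg_lt_neg_iff, div_lt_iff₀ (by linarith : (0:ℝ) < 2 * n)]
      nlinarith
    rw [hLHS]
    calc EE p (fun i j => G i j) ≤ (1 - q) ^ k := h1
      _ ≤ Real.exp (-q) ^ k := h2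
      _ = Real.exp (-((k : ℝ) * q)) := h3
      _ < _ := h4
  · have hzero : (∑ I : Finset (Fin n), ((1 - p) ^ I.card * p ^ (n - I.card)) *
          (if (G.submatrix id (fun j : ↥I => (j : Fin n))).rank = k then 1 else 0)) = 0 := by
      refine Finset.sum_eq_zero fun I _ => ?_
      have h1 : (G.submatrix id (fun j : ↥I => (j : Fin n))).rank ≤ Fintype.card ↥I :=
        Matrix.rank_le_card_width _
      rw [Fintype.card_coe] at h1
      have h2 : I.card ≤ n := by
        have := Finset.card_le_card (Finset.subset_univ I)
        simpa using this
      rw [if_neg (by omega), mul_zero]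
    rw [hzero]
    exact Real.exp_pos _
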